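/- Let X be a nonempty set, G ≤ S_X and F = N_{S_X}(G), acting on the set of rack folders over G by (λ_x : x ∈ X/G)·f = (κ_x : x ∈ X/G) with κ_x = f⁻¹ (g_y⁻¹ λ_{y g_y⁻¹} g_y) f, y = xf⁻¹. If an orbit of F on the set of rack folders over G contains a rack envelope, then every folder in that orbit is a rack envelope; the same holds with 'quandle' in place of 'rack'. -/

import Mathlib

/-- A rack: a binary operation with bijective left translations satisfying the left
self-distributive law. -/
structure RackStr (X : Type*) where
  op : X → X → X
  bij : ∀ x, Function.Bijective (op x)
  self_distrib : ∀ x y z, op x (op y z) = op (op x y) (op x z)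

/-- A quandle: an idempotent rack. -/
structure QuandleStr (X : Type*) extends RackStr X where
  idem : ∀ x, op x x = x

namespace RackStr

variable {X : Type*}

/-- The left translation `L_x : y ↦ x * y`, as a permutation of `X`. -/
noncomputable def L (Q : RackStr X) (x : X) : Equiv.Perm X :=
  Equiv.ofBijective (Q.op x) (Q.bij x)

/-- The left multiplication group `Lmlt(X,*) = ⟨L_x : x ∈ X⟩ ≤ S_X`. -/
noncomputable def lmlt (Q : RackStr X) : Subgroup (Equiv.Perm X) :=
  Subgroup.closure (Set.range Q.L)

end RackStr

/-- `R` is a complete set of representatives of the orbits of `G ≤ S_X` on `X`: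
every `y ∈ X` lies in the orbit of a unique element of `R`. -/
def IsTransversal {X : Type*} (G : Subgroup (Equiv.Perm X)) (R : Set X) : Prop :=
  ∀ y : X, ∃! x : X, x ∈ R ∧ ∃ g ∈ G, g • y = x

/-- The stabilizer `G_x` of `x` in `G`, as a subgroup of `S_X`. -/
def stabIn {X : Type*} (G : Subgroup (Equiv.Perm X)) (x : X) : Subgroup (Equiv.Perm X) :=
  G ⊓ MulAction.stabilizer (Equiv.Perm X) x

/-- The centralizer `C_G(G_x)` of the stabilizer `G_x` in `G`, as a subgroup of `S_X`. -/
def cgStab {X : Type*} (G : Subgroup (Equiv.Perm X)) (x : X) : Subgroup (Equiv.Perm X) :=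
  G ⊓ Subgroup.centralizer (stabIn G x : Set (Equiv.Perm X))

/-- The center `Z(G_x)` of the stabilizer `G_x`, as a subgroup of `S_X`. -/
def zStab {X : Type*} (G : Subgroup (Equiv.Perm X)) (x : X) : Subgroup (Equiv.Perm X) :=
  stabIn G x ⊓ Subgroup.centralizer (stabIn G x : Set (Equiv.Perm X))

/-- The conjugacy class `a^G = { g⁻¹ a g : g ∈ G }` of `a` under `G`
(written in left-action convention). -/
def conjClassOf {X : Type*} (G : Subgroup (Equiv.Perm X)) (a : Equiv.Perm X) :
    Set (Equiv.Perm X) :=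
  {h | ∃ g ∈ G, h = g * a * g⁻¹}

/-- A rack folder over `G`: a tuple `(λ_x : x ∈ R)` with `λ_x ∈ C_G(G_x)`. -/
def IsRackFolder {X : Type*} (G : Subgroup (Equiv.Perm X)) (R : Set X)
    (Λ : R → Equiv.Perm X) : Prop :=
  ∀ x : R, Λ x ∈ cgStab G (x : X)

/-- A quandle folder over `G`: a tuple `(λ_x : x ∈ R)` with `λ_x ∈ Z(G_x)`. -/
def IsQuandleFolder {X : Type*} (G : Subgroup (Equiv.Perm X)) (R : Set X)
    (Λ : R → Equiv.Perm X) : Prop :=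
  ∀ x : R, Λ x ∈ zStab G (x : X)

/-- The envelope condition: `⟨⋃_{x ∈ R} λ_x^G⟩ = G`. -/
def GeneratesG {X : Type*} (G : Subgroup (Equiv.Perm X)) (R : Set X)
    (Λ : R → Equiv.Perm X) : Prop :=
  Subgroup.closure (⋃ x : R, conjClassOf G (Λ x)) = G

/-- The action of `f ∈ N_{S_X}(G)` on tuples `(λ_x : x ∈ R)`:
`(Λ·f)_x = ((λ_{y g_y⁻¹})^{g_y})^f` with `y = xf⁻¹`, written in left-action convention. -/
def folderAct {X : Type*} (R : Set X) (gsel : X → Equiv.Perm X)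
    (hgR : ∀ y : X, (gsel y)⁻¹ • y ∈ R)
    (Λ : R → Equiv.Perm X) (f : Equiv.Perm X) : R → Equiv.Perm X :=
  fun x =>
    f * (gsel (f⁻¹ • (x : X)) *
        Λ ⟨(gsel (f⁻¹ • (x : X)))⁻¹ • (f⁻¹ • (x : X)), hgR _⟩ *
        (gsel (f⁻¹ • (x : X)))⁻¹) * f⁻¹

private lemma genG_folderAct_iff {X : Type*}
    (G : Subgroup (Equiv.Perm X)) (R : Set X) (hR : IsTransversal G R)
    (gsel : X → Equiv.Perm X) (hgG : ∀ y : X, gsel y ∈ G)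
    (hgR : ∀ y : X, (gsel y)⁻¹ • y ∈ R) (Λ : R → Equiv.Perm X)
    (f : Equiv.Perm X) (hf : f ∈ Subgroup.normalizer (G : Set (Equiv.Perm X))) :
    GeneratesG G R (folderAct R gsel hgR Λ f) ↔ GeneratesG G R Λ := by
  have hfG : ∀ h, h ∈ G ↔ f * h * f⁻¹ ∈ G := Subgroup.mem_normalizer_iff.mp hf
  have hfG' : ∀ h, h ∈ G ↔ f⁻¹ * h * f ∈ G := by
    intro h
    have := hfG (f⁻¹ * h * f)
    have e : f * (f⁻¹ * h * f) * f⁻¹ = h := by group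
    rw [e] at this
    exact this.symm
  -- the key set equality
  have hset : (⋃ x : R, conjClassOf G ((folderAct R gsel hgR Λ f) x)) =
      (fun h => f * h * f⁻¹) '' (⋃ x : R, conjClassOf G (Λ x)) := by
    ext h
    simp only [Set.mem_iUnion, Set.mem_image, conjClassOf, Set.mem_setOf_eq, folderAct]
    constructor
    · rintro ⟨x, g, hg, rfl⟩
      set y := f⁻¹ • (x : X) with hy
      refine ⟨(f⁻¹ * g * f * gsel y) * Λ ⟨(gsel y)⁻¹ • y, hgR _⟩ *
        (f⁻¹ * g * f * gsel y)⁻¹, ⟨⟨(gsel y)⁻¹ • y, hgR _⟩,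
        f⁻¹ * g * f * gsel y, ?_, by simp only [hy]⟩, by simp only [hy]; group⟩
      exact G.mul_mem ((hfG' g).mp hg) (hgG y)
    · rintro ⟨h, ⟨z, g, hg, rfl⟩, rfl⟩
      -- find x ∈ R with representative z
      obtain ⟨x, ⟨hxR, g0, hg0G, hg0x⟩, -⟩ := hR (f • (z : X))
      set y := f⁻¹ • x with hy
      have hyz : (gsel y)⁻¹ • y = (z : X) := by
        obtain ⟨w, -, hw⟩ := hR y
        have h1 : (gsel y)⁻¹ • y = w :=
          hw _ ⟨hgR y, (gsel y)⁻¹, G.inv_mem (hgG y), rfl⟩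
        have h2 : (z : X) = w := by
          refine hw _ ⟨z.2, f⁻¹ * g0⁻¹ * f, (hfG' g0⁻¹).mp (G.inv_mem hg0G), ?_⟩
          have : g0⁻¹ • x = f • (z : X) := by
            rw [← hg0x]; simp [smul_smul]
          simp [hy, mul_smul, this]
        rw [h1, ← h2]
      refine ⟨⟨x, hxR⟩, f * (g * (gsel y)⁻¹) * f⁻¹,
        (hfG (g * (gsel y)⁻¹)).mp (G.mul_mem hg (G.inv_mem (hgG y))), ?_⟩
      have hΛ : Λ ⟨(gsel (f⁻¹ • ((⟨x, hxR⟩ : R) : X)))⁻¹ • (f⁻¹ • ((⟨x, hxR⟩ : R) : X)),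
          hgR _⟩ = Λ z := by
        congr 1
        exact Subtype.ext hyz
      rw [hΛ]
      show f * (g * Λ z * g⁻¹) * f⁻¹ = _
      simp only [hy]
      group
  -- transport the closure through conjugation by f
  unfold GeneratesG
  rw [hset]
  have himg : (fun h => f * h * f⁻¹) '' (⋃ x : R, conjClassOf G (Λ x)) =
      (MulAut.conj f).toMonoidHom '' (⋃ x : R, conjClassOf G (Λ x)) := by
    rfl
  rw [himg, ← MonoidHom.map_closure]
  have hGmap : Subgroup.map (MulAut.conj f).toMonoidHom G = G := by
    ext h
    simp only [Subgroup.mem_map, MulEquiv.toMonoidHom_eq_coe, MonoidHom.coe_coe,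
      MulAut.conj_apply]
    constructor
    · rintro ⟨g, hg, rfl⟩
      exact (hfG g).mp hg
    · intro hh
      exact ⟨f⁻¹ * h * f, (hfG' h).mp hh, by group⟩
  constructor
  · intro hcl
    have := congrArg (Subgroup.map (MulAut.conj f⁻¹).toMonoidHom) hcl
    exact Subgroup.map_injective (MulAut.conj f).injective (by rw [hcl, hGmap])
  · intro hcl
    rw [hcl, hGmap]

/-- Theorem `Th:Action`(iii): if an orbit of `N_{S_X}(G)` on the set of
rack folders over `G` contains a rack envelope, then the entire orbit consists of rack
envelopes; the same holds with "quandle" in place of "rack".  (The elements of the orbit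
of a folder `Λ` are exactly the tuples `Λ·f`, `f ∈ N_{S_X}(G)`.) -/
theorem orbit_of_envelope_consists_of_envelopes {X : Type*} [Nonempty X]
    (G : Subgroup (Equiv.Perm X)) (R : Set X) (hR : IsTransversal G R)
    (gsel : X → Equiv.Perm X) (hgG : ∀ y : X, gsel y ∈ G)
    (hgR : ∀ y : X, (gsel y)⁻¹ • y ∈ R) (Λ : R → Equiv.Perm X) :
    (IsRackFolder G R Λ → ∀ f ∈ Subgroup.normalizer (G : Set (Equiv.Perm X)), ∀ f' ∈ Subgroup.normalizer (G : Set (Equiv.Perm X)),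
        GeneratesG G R (folderAct R gsel hgR Λ f) →
        GeneratesG G R (folderAct R gsel hgR Λ f')) ∧
    (IsQuandleFolder G R Λ → ∀ f ∈ Subgroup.normalizer (G : Set (Equiv.Perm X)), ∀ f' ∈ Subgroup.normalizer (G : Set (Equiv.Perm X)),
        GeneratesG G R (folderAct R gsel hgR Λ f) →
        GeneratesG G R (folderAct R gsel hgR Λ f')) := by
  constructor <;>
  · intro _ f hf f' hf' h
    rw [genG_folderAct_iff G R hR gsel hgG hgR Λ f' hf']
    exact (genG_folderAct_iff G R hR gsel hgG hgR Λ f hf).mp h
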